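/- Suppose V ⊆ ℝ^d is a linear subspace of dimension k ≤ d and A ⊆ 𝕊^{d−1} ∩ V is a compact set with the property that 𝕊^{d−1} ∩ V ⊆ ⋃_{v∈A} closure(S^+(v)). Then there exist vectors v¹, …, vⁿ ∈ A and a linear subspace Ṽ ⊆ V of dimension < k such that (𝕊^{d−1} ∩ V) \ ⋃_{i=1}^n S^+(vⁱ) ⊆ Ṽ. -/

import Mathlib

open scoped RealInnerProductSpace
open Set Finset

noncomputable section

abbrev E (d : ℕ) : Type := EuclideanSpace ℝ (Fin d)

/-- `S^+(v) = {w ∈ 𝕊^{d-1} : ⟨v,w⟩ > 0}`. -/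
def Splus {d : ℕ} (v : E d) : Set (E d) := {w | ‖w‖ = 1 ∧ 0 < ⟪v, w⟫}

/-- Padding a sum over a finset of card `≤ n` to a sum over `Fin n`. -/
lemma pad_sum {M α : Type*} [AddCommMonoid M] (t : Finset α) {n : ℕ}
    (hm : t.card ≤ n) (g : α → M) :
    ∑ j : Fin n, (if h : (j : ℕ) < t.card then g ↑(t.equivFin.symm ⟨j.1, h⟩) else 0)
      = ∑ y ∈ t, g y := by
  classical
  set F : Fin n → M := fun j =>
    if h : (j : ℕ) < t.card then g ↑(t.equivFin.symm ⟨j.1, h⟩) else 0 with hF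
  have h1 : ∑ j ∈ (Finset.univ.map (Fin.castLEEmb hm)), F j = ∑ j : Fin n, F j := by
    apply Finset.sum_subset (Finset.subset_univ _)
    intro j _ hj
    have : ¬ ((j : ℕ) < t.card) := by
      intro h
      exact hj (Finset.mem_map.2 ⟨⟨(j : ℕ), h⟩, Finset.mem_univ _, by
        simp [Fin.castLEEmb, Fin.castLE]⟩)
    simp [hF, this]
  rw [← h1, Finset.sum_map]
  have h2 : ∀ i : Fin t.card, F (Fin.castLEEmb hm i) = g ↑(t.equivFin.symm i) := by
    intro i
    have hi : ((Fin.castLEEmb hm i : Fin n) : ℕ) < t.card := by simp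
    simp only [hF]
    rw [dif_pos hi]
    congr 1
  calc ∑ i : Fin t.card, F (Fin.castLEEmb hm i)
      = ∑ i : Fin t.card, g ↑(t.equivFin.symm i) := by
        exact Finset.sum_congr rfl fun i _ => h2 i
    _ = ∑ y : {x // x ∈ t}, g ↑y := Equiv.sum_comp t.equivFin.symm (fun y => g ↑y)
    _ = ∑ y ∈ t, g y := by rw [Finset.sum_coe_sort]

/-- Convex hull of a nonempty compact set in `E d` is compact. -/
lemma isCompact_convexHull_of_isCompact {d : ℕ} {A : Set (E d)} (hA : IsCompact A)
    (hne : A.Nonempty) : IsCompact (convexHull ℝ A) := by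
  classical
  obtain ⟨a₀, ha₀⟩ := hne
  set f : (Fin (d + 1) → ℝ) × (Fin (d + 1) → E d) → E d :=
    fun p => ∑ j : Fin (d + 1), p.1 j • p.2 j with hf
  have hcont : Continuous f := by
    apply continuous_finset_sum
    intro j _
    exact (((continuous_apply j).comp continuous_fst).smul
      ((continuous_apply j).comp continuous_snd))
  have hK : IsCompact ((stdSimplex ℝ (Fin (d + 1))) ×ˢ (Set.univ.pi fun _ : Fin (d + 1) => A)) :=
    (isCompact_stdSimplex ℝ _).prod (isCompact_univ_pi fun _ => hA)
  have himage : convexHull ℝ A =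
      f '' ((stdSimplex ℝ (Fin (d + 1))) ×ˢ (Set.univ.pi fun _ : Fin (d + 1) => A)) := by
    apply Set.Subset.antisymm
    · rw [convexHull_eq_union]
      rintro x hx
      simp only [Set.mem_iUnion] at hx
      obtain ⟨t, hts, hai, hxt⟩ := hx
      have hcard : t.card ≤ d + 1 := by
        have h := hai.card_le_finrank_succ
        rw [Fintype.card_coe] at h
        have h2 : Module.finrank ℝ ↥(vectorSpan ℝ (Set.range (Subtype.val : ↥t → E d)))
            ≤ Module.finrank ℝ (E d) := Submodule.finrank_le _
        have h3 : Module.finrank ℝ (E d) = d := finrank_euclideanSpace_fin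
        omega
      rw [Finset.convexHull_eq] at hxt
      obtain ⟨w, hw0, hw1, hwx⟩ := hxt
      set lam : Fin (d + 1) → ℝ := fun j =>
        if h : (j : ℕ) < t.card then w ↑(t.equivFin.symm ⟨j.1, h⟩) else 0 with hlam
      set z : Fin (d + 1) → E d := fun j =>
        if h : (j : ℕ) < t.card then ↑(t.equivFin.symm ⟨j.1, h⟩) else a₀ with hz
      refine ⟨(lam, z), ⟨⟨?_, ?_⟩, ?_⟩, ?_⟩
      · intro j
        simp only [hlam]
        split
        · exact hw0 _ (Finset.coe_mem _)
        · exact le_rfl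
      · simpa using (pad_sum t hcard w).trans hw1
      · intro j _
        simp only [hz]
        split
        · exact hts (Finset.coe_mem _)
        · exact ha₀
      · have : f (lam, z) = ∑ j : Fin (d + 1),
            (if h : (j : ℕ) < t.card then
              w ↑(t.equivFin.symm ⟨j.1, h⟩) • (↑(t.equivFin.symm ⟨j.1, h⟩) : E d) else 0) := by
          apply Finset.sum_congr rfl
          intro j _
          simp only [hlam, hz]
          split <;> simp
        rw [this, pad_sum t hcard (fun y => w y • y)]
        rw [← hwx, Finset.centerMass_eq_of_sum_1 _ _ hw1]
        simp
    · rintro x ⟨⟨lam, z⟩, ⟨⟨hlam0, hlam1⟩, hzA⟩, rfl⟩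
      have hz : ∀ j, z j ∈ A := by
        intro j; exact hzA j (Set.mem_univ j)
      have := Finset.centerMass_mem_convexHull (Finset.univ)
        (fun i _ => hlam0 i) (by rw [hlam1]; norm_num) (fun i _ => hz i)
      rwa [Finset.centerMass_eq_of_sum_1 _ _ hlam1] at this
  rw [himage]
  exact hK.image hcont

/-- **Lemma (covering the sphere by half-spheres).** Let `V ⊆ ℝ^d` be a linear subspace
of dimension `k` (`1 ≤ k ≤ d`, the case `k = 0` being void) and `A ⊆ 𝕊^{d-1} ∩ V` a
compact set with `𝕊^{d-1} ∩ V ⊆ ⋃_{v ∈ A} closure (S^+(v))`. Then there are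
`v¹, …, vⁿ ∈ A` and a linear subspace `Ṽ ⊆ V` of dimension `< k` with
`(𝕊^{d-1} ∩ V) \ ⋃ᵢ S^+(vⁱ) ⊆ Ṽ`. -/
theorem exists_finite_halfSphere_cover {d k : ℕ} (hk : 0 < k) (hkd : k ≤ d)
    (V : Submodule ℝ (E d)) (hV : Module.finrank ℝ V = k)
    (A : Set (E d)) (hAc : IsCompact A)
    (hAsub : A ⊆ Metric.sphere (0 : E d) 1 ∩ (V : Set (E d)))
    (hcov : Metric.sphere (0 : E d) 1 ∩ (V : Set (E d)) ⊆ ⋃ v ∈ A, closure (Splus v)) :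
    ∃ (n : ℕ) (vs : Fin n → E d) (W : Submodule ℝ (E d)),
      (∀ i, vs i ∈ A) ∧ W ≤ V ∧ Module.finrank ℝ W < k ∧
      (Metric.sphere (0 : E d) 1 ∩ (V : Set (E d))) \ (⋃ i, Splus (vs i))
        ⊆ (W : Set (E d)) := by
  classical
  -- closure of S^+(v) consists of vectors with nonneg inner product
  have hcl : ∀ v : E d, closure (Splus v) ⊆ {u : E d | 0 ≤ ⟪v, u⟫} := by
    intro v
    apply closure_minimal
    · exact fun u hu => le_of_lt hu.2
    · exact isClosed_le continuous_const (Continuous.inner continuous_const continuous_id)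
  -- B is nonempty
  have hVne : ∃ x : E d, x ∈ V ∧ ‖x‖ = 1 := by
    have : V ≠ ⊥ := by
      intro h
      rw [h, finrank_bot] at hV
      omega
    obtain ⟨x, hxV, hx0⟩ := Submodule.exists_mem_ne_zero_of_ne_bot this
    refine ⟨(‖x‖)⁻¹ • x, V.smul_mem _ hxV, ?_⟩
    rw [norm_smul, norm_inv, norm_norm, inv_mul_cancel₀ (norm_ne_zero_iff.2 hx0)]
  obtain ⟨x₀, hx₀V, hx₀n⟩ := hVne
  have hx₀B : x₀ ∈ Metric.sphere (0 : E d) 1 ∩ (V : Set (E d)) :=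
    ⟨by simpa [mem_sphere_zero_iff_norm] using hx₀n, hx₀V⟩
  -- A is nonempty
  have hAne : A.Nonempty := by
    obtain ⟨v, hv, -⟩ := Set.mem_iUnion₂.1 (hcov hx₀B)
    exact ⟨v, hv⟩
  -- 0 ∈ convexHull A
  have h0 : (0 : E d) ∈ convexHull ℝ A := by
    by_contra h0
    have hconv : Convex ℝ (convexHull ℝ A) := convex_convexHull ℝ A
    have hcls : IsClosed (convexHull ℝ A) :=
      (isCompact_convexHull_of_isCompact hAc hAne).isClosed
    obtain ⟨f, u, hfu, hu0⟩ := geometric_hahn_banach_closed_point hconv hcls h0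
    have hu0' : u < 0 := by simpa using hu0
    set y : E d := (InnerProductSpace.toDual ℝ (E d)).symm f with hy
    have hyv : ∀ v ∈ A, ⟪y, v⟫ < 0 := by
      intro v hv
      have h1 : f v < u := hfu v (subset_convexHull ℝ A hv)
      have h2 : f v < 0 := lt_trans h1 hu0'
      rw [hy, InnerProductSpace.toDual_symm_apply]
      exact h2
    -- project y to V
    set y' : E d := (V.orthogonalProjectionOnto y : E d) with hy'
    have hproj : ∀ a : E d, a ∈ V → ⟪y, a⟫ = ⟪y', a⟫ := by
      intro a ha
      have horth : y - y' ∈ Vᗮ := Submodule.sub_starProjection_mem_orthogonal (K := V) y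
      have h0' : ⟪y - y', a⟫ = 0 := by
        rw [real_inner_comm]
        exact (Submodule.mem_orthogonal V (y - y')).1 horth a ha
      have h1' : ⟪y - y', a⟫ = ⟪y, a⟫ - ⟪y', a⟫ := inner_sub_left y y' a
      linarith
    have hy'v : ∀ v ∈ A, ⟪y', v⟫ < 0 := by
      intro v hv
      rw [← hproj v (hAsub hv).2]
      exact hyv v hv
    have hy'0 : y' ≠ 0 := by
      obtain ⟨v₀, hv₀⟩ := hAne
      intro h
      have h1 := hy'v v₀ hv₀
      rw [h] at h1
      simp at h1
    set w : E d := (‖y'‖)⁻¹ • y' with hw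
    have hwV : w ∈ V := V.smul_mem _ (V.orthogonalProjectionOnto y).2
    have hwn : ‖w‖ = 1 := by
      rw [hw, norm_smul, norm_inv, norm_norm, inv_mul_cancel₀ (norm_ne_zero_iff.2 hy'0)]
    have hwB : w ∈ Metric.sphere (0 : E d) 1 ∩ (V : Set (E d)) :=
      ⟨mem_sphere_zero_iff_norm.2 hwn, hwV⟩
    obtain ⟨v, hvA, hvw⟩ := Set.mem_iUnion₂.1 (hcov hwB)
    have h1 : 0 ≤ ⟪v, w⟫ := hcl v hvw
    have h2 : ⟪v, w⟫ < 0 := by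
      rw [hw, real_inner_smul_right]
      have h3 : ⟪v, y'⟫ < 0 := by
        rw [real_inner_comm]
        exact hy'v v hvA
      have hpos : 0 < (‖y'‖)⁻¹ := by
        have := norm_pos_iff.2 hy'0
        positivity
      exact mul_neg_of_pos_of_neg hpos h3
    linarith
  -- extract a finite convex combination summing to 0
  rw [_root_.convexHull_eq] at h0
  obtain ⟨ι, t, wt, zf, hw0, hw1, hzA, hcm⟩ := h0
  have hsum0 : ∑ i ∈ t, wt i • zf i = 0 := by
    rw [← Finset.centerMass_eq_of_sum_1 _ _ hw1, hcm]
  have hex : ∃ i ∈ t, 0 < wt i := by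
    by_contra h
    push_neg at h
    have hz : ∑ i ∈ t, wt i = 0 :=
      Finset.sum_eq_zero fun i hi => le_antisymm (h i hi) (hw0 i hi)
    rw [hw1] at hz
    norm_num at hz
  obtain ⟨i₀, hi₀t, hi₀pos⟩ := hex
  set e := t.equivFin with he
  refine ⟨t.card, fun j => zf ↑(e.symm j), V ⊓ (ℝ ∙ zf i₀)ᗮ, ?_, inf_le_left, ?_, ?_⟩
  · intro j
    exact hzA _ (Finset.coe_mem _)
  · have hz0V : zf i₀ ∈ V := (hAsub (hzA i₀ hi₀t)).2
    have hnorm : ‖zf i₀‖ = 1 :=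
      mem_sphere_zero_iff_norm.1 (hAsub (hzA i₀ hi₀t)).1
    have hne : V ⊓ (ℝ ∙ zf i₀)ᗮ ≠ V := by
      intro hEq
      have hmem : zf i₀ ∈ V ⊓ (ℝ ∙ zf i₀)ᗮ := by rw [hEq]; exact hz0V
      have h2 := (Submodule.mem_inf.1 hmem).2
      rw [Submodule.mem_orthogonal_singleton_iff_inner_right] at h2
      rw [real_inner_self_eq_norm_sq, hnorm] at h2
      norm_num at h2
    have hlt : V ⊓ (ℝ ∙ zf i₀)ᗮ < V := lt_of_le_of_ne inf_le_left hne
    have := Submodule.finrank_lt_finrank_of_lt hlt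
    omega
  · rintro x ⟨⟨hxs, hxV⟩, hxn⟩
    have hx1 : ‖x‖ = 1 := mem_sphere_zero_iff_norm.1 hxs
    have hnonpos : ∀ i ∈ t, ⟪zf i, x⟫ ≤ 0 := by
      intro i hi
      by_contra h
      push_neg at h
      apply hxn
      refine Set.mem_iUnion.2 ⟨e ⟨i, hi⟩, hx1, ?_⟩
      simpa [Equiv.symm_apply_apply] using h
    have hsum : ∑ i ∈ t, wt i * ⟪zf i, x⟫ = 0 := by
      have h1 : ⟪(∑ i ∈ t, wt i • zf i), x⟫ = 0 := by rw [hsum0]; simp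
      rw [sum_inner] at h1
      calc ∑ i ∈ t, wt i * ⟪zf i, x⟫
          = ∑ i ∈ t, ⟪wt i • zf i, x⟫ := by
            refine Finset.sum_congr rfl fun i _ => ?_
            rw [real_inner_smul_left]
        _ = 0 := h1
    have key := (Finset.sum_eq_zero_iff_of_nonpos
      (fun i hi => mul_nonpos_iff.2 (Or.inl ⟨hw0 i hi, hnonpos i hi⟩))).1 hsum i₀ hi₀t
    have hinner0 : ⟪zf i₀, x⟫ = 0 := by
      rcases mul_eq_zero.1 key with h | h
      · exact absurd h (ne_of_gt hi₀pos)
      · exact h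
    exact Submodule.mem_inf.2
      ⟨hxV, Submodule.mem_orthogonal_singleton_iff_inner_right.2 hinner0⟩

end
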